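/- arXiv:2402.12619 — 5 statements merged into one kernel-verified Lean document; each statement's English description precedes it below -/
import Mathlib

section
/- Let R be a finite commutative ring with identity, T = Tr(R) the ring of 2×2 upper triangular matrices over R, and u a unit of R. Let A be the matrix with entries a11 = u, a12 = 0, a21 = 0, a22 = 0. Then the set of elements B of T \ Z(T) with B ≠ A and AB = BA is exactly the set of diagonal matrices diag(a,c) with a, c ∈ R that are neither scalar matrices nor equal to A, and this set has cardinality |R|^2 − |R| − 1. -/
open Matrix

/-- The ring of 2×2 upper triangular matrices over `R`. -/
def Tri (R : Type*) [CommRing R] : Subring (Matrix (Fin 2) (Fin 2) R) where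
  carrier := {A | A 1 0 = 0}
  mul_mem' := by
    intro a b ha hb
    simp only [Set.mem_setOf_eq] at *
    simp [Matrix.mul_apply, Fin.sum_univ_two, ha, hb]
  one_mem' := by simp [Matrix.one_apply]
  add_mem' := by
    intro a b ha hb
    simp_all [Matrix.add_apply]
  zero_mem' := by simp
  neg_mem' := by
    intro a ha
    simp_all

/-- The commuting graph of a ring `T`: vertices are the noncentral elements,
two distinct vertices are adjacent iff they commute. -/
def commGraph (T : Type*) [Ring T] : SimpleGraph {x : T // x ∉ Set.center T} where
  Adj a b := a ≠ b ∧ (a : T) * b = b * a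
  symm := by
    constructor
    rintro a b ⟨h1, h2⟩
    exact ⟨h1.symm, h2.symm⟩
  loopless := by constructor; rintro a ⟨h, _⟩; exact h rfl

section helpers
variable {R : Type*} [CommRing R]

lemma mem_Tri_iff (M : Matrix (Fin 2) (Fin 2) R) : M ∈ Tri R ↔ M 1 0 = 0 := Iff.rfl

lemma Tri10 (B : Tri R) : (B : Matrix (Fin 2) (Fin 2) R) 1 0 = 0 := B.2

lemma center_Tri_iff (B : Tri R) :
    B ∈ Set.center (Tri R) ↔ ∃ x : R, (B : Matrix (Fin 2) (Fin 2) R) = x • 1 := by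
  rw [Semigroup.mem_center_iff]
  constructor
  · intro h
    have h10 := Tri10 B
    have hE11 : (!![1,0;0,0] : Matrix (Fin 2) (Fin 2) R) ∈ Tri R := by simp [mem_Tri_iff]
    have hE12 : (!![0,1;0,0] : Matrix (Fin 2) (Fin 2) R) ∈ Tri R := by simp [mem_Tri_iff]
    have h1 := congrArg (fun M : Tri R => (M : Matrix (Fin 2) (Fin 2) R)) (h ⟨_, hE11⟩)
    have h2 := congrArg (fun M : Tri R => (M : Matrix (Fin 2) (Fin 2) R)) (h ⟨_, hE12⟩)
    simp only [Subring.coe_mul] at h1 h2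
    have hb : (B : Matrix (Fin 2) (Fin 2) R) 0 1 = 0 := by
      have := congrFun (congrFun h1 0) 1
      simpa [Matrix.mul_apply, Fin.sum_univ_two] using this
    have hac : (B : Matrix (Fin 2) (Fin 2) R) 1 1 = (B : Matrix (Fin 2) (Fin 2) R) 0 0 := by
      have := congrFun (congrFun h2 0) 1
      simpa [Matrix.mul_apply, Fin.sum_univ_two] using this
    refine ⟨(B : Matrix (Fin 2) (Fin 2) R) 0 0, ?_⟩
    ext i j
    fin_cases i <;> fin_cases j <;>
      simp [Matrix.smul_apply, Matrix.one_apply, hb, h10, hac]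
  · rintro ⟨x, hx⟩ g
    apply Subtype.ext
    simp only [Subring.coe_mul, hx]
    rw [mul_smul_comm, smul_mul_assoc, mul_one, one_mul]

lemma comm_iff_A1 (u : Rˣ) (A B : Tri R)
    (hA : (A : Matrix (Fin 2) (Fin 2) R) = !![(u : R), 0; 0, 0]) :
    A * B = B * A ↔ (B : Matrix (Fin 2) (Fin 2) R) 0 1 = 0 := by
  have h10 := Tri10 B
  constructor
  · intro h
    have h' := congrArg (fun M : Tri R => (M : Matrix (Fin 2) (Fin 2) R)) h
    simp only [Subring.coe_mul, hA] at h'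
    have h01 := congrFun (congrFun h' 0) 1
    simp [Matrix.mul_apply, Fin.sum_univ_two] at h01
    exact h01
  · intro hb
    apply Subtype.ext
    simp only [Subring.coe_mul, hA]
    ext i j
    fin_cases i <;> fin_cases j <;>
      simp [Matrix.mul_apply, Fin.sum_univ_two, hb, h10, mul_comm]

end helpers

/-- Theorem 2.2(i): for `A = [[u,0],[0,0]]` with `u` a unit, the neighbourhood
of `A` in the commuting graph of `Tri R` consists exactly of the diagonal
matrices which are neither scalar nor equal to `A`, and it has
`|R|^2 - |R| - 1` elements. -/
theorem neighbourhood_A1 {R : Type*} [CommRing R] [Fintype R] (u : Rˣ) (A : Tri R)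
    (hA : (A : Matrix (Fin 2) (Fin 2) R) = !![(u : R), 0; 0, 0]) :
    {B : Tri R | A * B = B * A ∧ B ≠ A ∧ B ∉ Set.center (Tri R)} =
      {B : Tri R | (∃ a c : R, (B : Matrix (Fin 2) (Fin 2) R) = !![a, 0; 0, c]) ∧
        (¬ ∃ x : R, (B : Matrix (Fin 2) (Fin 2) R) = x • (1 : Matrix (Fin 2) (Fin 2) R)) ∧
        B ≠ A} ∧
    Nat.card {B : Tri R | A * B = B * A ∧ B ≠ A ∧ B ∉ Set.center (Tri R)} =
      Nat.card R ^ 2 - Nat.card R - 1 := by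
  classical
  constructor
  · ext B
    have h10 := Tri10 B
    simp only [Set.mem_setOf_eq, comm_iff_A1 u A B hA, center_Tri_iff]
    constructor
    · rintro ⟨hb, hne, hnc⟩
      refine ⟨⟨(B : Matrix (Fin 2) (Fin 2) R) 0 0, (B : Matrix (Fin 2) (Fin 2) R) 1 1, ?_⟩,
        hnc, hne⟩
      ext i j
      fin_cases i <;> fin_cases j <;> simp [hb, h10]
    · rintro ⟨⟨a, c, hd⟩, hnc, hne⟩
      refine ⟨?_, hne, hnc⟩
      rw [hd]; simp
  · -- cardinality
    have e : {B : Tri R | A * B = B * A ∧ B ≠ A ∧ B ∉ Set.center (Tri R)} ≃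
        {p : R × R // p.1 ≠ p.2 ∧ p ≠ ((u : R), 0)} := by
      refine ⟨fun B => ⟨((B.1 : Matrix (Fin 2) (Fin 2) R) 0 0,
          (B.1 : Matrix (Fin 2) (Fin 2) R) 1 1), ?_, ?_⟩,
        fun p => ⟨⟨!![p.1.1, 0; 0, p.1.2], by simp [mem_Tri_iff]⟩, ?_, ?_, ?_⟩, ?_, ?_⟩
      · -- B00 ≠ B11
        obtain ⟨B, hc, hne, hnc⟩ := B
        intro h
        apply hnc
        rw [center_Tri_iff]
        refine ⟨(B : Matrix (Fin 2) (Fin 2) R) 0 0, ?_⟩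
        have hb := (comm_iff_A1 u A B hA).mp hc
        have h10 := Tri10 B
        ext i j
        fin_cases i <;> fin_cases j <;>
          simp_all [Matrix.smul_apply, Matrix.one_apply]
      · -- pair ≠ (u,0)
        obtain ⟨B, hc, hne, hnc⟩ := B
        intro h
        apply hne
        have hb := (comm_iff_A1 u A B hA).mp hc
        have h10 := Tri10 B
        have h1 : (B : Matrix (Fin 2) (Fin 2) R) 0 0 = (u : R) := congrArg Prod.fst h
        have h2 : (B : Matrix (Fin 2) (Fin 2) R) 1 1 = 0 := congrArg Prod.snd h
        apply Subtype.ext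
        rw [hA]
        ext i j
        fin_cases i <;> fin_cases j <;> simp_all
      · -- commutes
        rw [comm_iff_A1 u A _ hA]
        simp
      · -- ≠ A
        intro h
        have := congrArg (fun M : Tri R => (M : Matrix (Fin 2) (Fin 2) R)) h
        simp only [hA] at this
        have h1 := congrFun (congrFun this 0) 0
        have h2 := congrFun (congrFun this 1) 1
        simp at h1 h2
        exact p.2.2 (Prod.ext h1 h2)
      · -- not central
        rw [center_Tri_iff]
        rintro ⟨x, hx⟩
        have h1 := congrFun (congrFun hx 0) 0
        have h2 := congrFun (congrFun hx 1) 1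
        simp [Matrix.smul_apply, Matrix.one_apply] at h1 h2
        exact p.2.1 (h1.trans h2.symm)
      · -- left_inv
        rintro ⟨B, hB⟩
        have hb := (comm_iff_A1 u A B hA).mp hB.1
        have h10 := Tri10 B
        apply Subtype.ext
        apply Subtype.ext
        ext i j
        fin_cases i <;> fin_cases j <;> simp [hb, h10]
      · -- right_inv
        rintro ⟨⟨a, c⟩, hp⟩
        simp
    rw [Nat.card_congr e]
    rcases subsingleton_or_nontrivial R with hR | hR
    · haveI he : IsEmpty {p : R × R // p.1 ≠ p.2 ∧ p ≠ ((u : R), 0)} :=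
        ⟨fun p => p.2.1 (Subsingleton.elim _ _)⟩
      have h0 : Nat.card {p : R × R // p.1 ≠ p.2 ∧ p ≠ ((u : R), 0)} = 0 :=
        Nat.card_of_isEmpty
      have h1 : Nat.card R = 1 := by
        rw [Nat.card_eq_fintype_card]
        exact Fintype.card_eq_one_iff.mpr ⟨1, fun y => Subsingleton.elim _ _⟩
      rw [h0, h1]
      rfl
    · rw [Nat.card_eq_fintype_card, Nat.card_eq_fintype_card]
      have hu : (u : R) ≠ 0 := by
        intro h
        have := u.mul_inv
        rw [h, zero_mul] at this
        exact zero_ne_one this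
      have hD : (Finset.univ.filter fun p : R × R => p.1 = p.2).card = Fintype.card R := by
        rw [show (Finset.univ.filter fun p : R × R => p.1 = p.2) =
            Finset.univ.image (fun a : R => (a, a)) from ?_]
        · rw [Finset.card_image_of_injective _ (fun a b h => congrArg Prod.fst h),
            Finset.card_univ]
        · ext p
          simp only [Finset.mem_filter, Finset.mem_univ, true_and, Finset.mem_image]
          constructor
          · intro h
            exact ⟨p.1, by cases p; simp_all⟩
          · rintro ⟨a, rfl⟩
            rfl
      have hneg : (Finset.univ.filter fun p : R × R =>
          ¬(p.1 ≠ p.2 ∧ p ≠ ((u : R), 0))).card = Fintype.card R + 1 := by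
        rw [show (Finset.univ.filter fun p : R × R => ¬(p.1 ≠ p.2 ∧ p ≠ ((u : R), 0))) =
            insert ((u : R), 0) (Finset.univ.filter fun p : R × R => p.1 = p.2) from ?_]
        · rw [Finset.card_insert_of_notMem (by simp [hu]), hD]
        · ext p
          simp only [Finset.mem_filter, Finset.mem_univ, true_and, Finset.mem_insert,
            not_and_or, not_ne_iff]
          tauto
      have hsum := Finset.card_filter_add_card_filter_not
        (s := (Finset.univ : Finset (R × R)))
        (p := fun p : R × R => p.1 ≠ p.2 ∧ p ≠ ((u : R), 0))
      rw [hneg, Finset.card_univ, Fintype.card_prod] at hsum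
      rw [Fintype.card_subtype]
      have h2 : Fintype.card R ^ 2 = Fintype.card R * Fintype.card R := sq (Fintype.card R)
      omega
end

section
/- Let F be a finite field with q = p^n elements and T = Tr(F) the ring of 2×2 upper triangular matrices over F. Then the commuting graph Γ(T) has exactly (1/2)·q·(q^2 − 1)·(q^2 − q − 1) edges. -/
open Matrix

section Aux
variable {F : Type*} [Field F] [Fintype F] [DecidableEq F]

lemma tri_apply_10 (A : Tri F) : (A : Matrix (Fin 2) (Fin 2) F) 1 0 = 0 := A.2

def mk2 (a b c : F) : Tri F := ⟨!![a, b; 0, c], by show !![a,b;0,c] 1 0 = 0; simp⟩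

def triEquiv : Tri F ≃ F × F × F where
  toFun A := (A.1 0 0, A.1 0 1, A.1 1 1)
  invFun x := mk2 x.1 x.2.1 x.2.2
  left_inv A := by
    apply Subtype.ext
    ext i j
    fin_cases i <;> fin_cases j <;> simp [mk2, tri_apply_10]
  right_inv x := by simp [mk2]

lemma comm_iff (A B : Tri F) : A * B = B * A ↔
    A.1 0 0 * B.1 0 1 + A.1 0 1 * B.1 1 1 = B.1 0 0 * A.1 0 1 + B.1 0 1 * A.1 1 1 := by
  rw [Subtype.ext_iff]
  constructor
  · intro h
    have := congr_fun (congr_fun (h : (A.1 * B.1 : Matrix _ _ F) = B.1 * A.1) 0) 1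
    simpa [Matrix.mul_apply, Fin.sum_univ_two] using this
  · intro h
    show (A.1 * B.1 : Matrix _ _ F) = B.1 * A.1
    ext i j
    fin_cases i <;> fin_cases j <;>
      simp [Matrix.mul_apply, Fin.sum_univ_two, tri_apply_10, mul_comm] <;>
      linear_combination h
end Aux

section Aux2
variable {F : Type*} [Field F] [Fintype F] [DecidableEq F]
set_option linter.unusedSectionVars false

lemma mem_center_iff' (A : Tri F) :
    A ∈ Set.center (Tri F) ↔ A.1 0 0 = A.1 1 1 ∧ A.1 0 1 = 0 := by
  rw [Semigroup.mem_center_iff]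
  constructor
  · intro h
    have h1 := (comm_iff (mk2 0 1 0) A).mp (h (mk2 0 1 0))
    have h2 := (comm_iff (mk2 1 0 0) A).mp (h (mk2 1 0 0))
    simp [mk2] at h1 h2
    exact ⟨h1.symm, h2⟩
  · rintro ⟨h1, h2⟩ g
    rw [comm_iff]
    rw [h2, ← h1]
    ring

noncomputable instance : Fintype (Tri F) := Fintype.ofEquiv _ (triEquiv (F := F)).symm

lemma card_tri : Fintype.card (Tri F) = Fintype.card F ^ 3 := by
  rw [Fintype.card_congr (triEquiv (F := F))]
  simp [pow_succ, mul_assoc]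

def centerEquiv : {A : Tri F // A ∈ Set.center (Tri F)} ≃ F where
  toFun A := A.1.1 0 0
  invFun a := ⟨mk2 a 0 a, by rw [mem_center_iff']; simp [mk2]⟩
  left_inv A := by
    obtain ⟨h1, h2⟩ := (mem_center_iff' A.1).mp A.2
    apply Subtype.ext; apply Subtype.ext
    ext i j
    fin_cases i <;> fin_cases j <;> simp [mk2, tri_apply_10, h1, h2]
  right_inv a := by simp [mk2]

end Aux2

section Aux3
variable {F : Type*} [Field F] [Fintype F] [DecidableEq F]
set_option linter.unusedSectionVars false

def commEquiv1 (A : Tri F) (h : A.1 0 0 ≠ A.1 1 1) :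
    {B : Tri F // A * B = B * A} ≃ F × F where
  toFun B := (B.1.1 0 0, B.1.1 1 1)
  invFun x := ⟨mk2 x.1 (A.1 0 1 * (x.1 - x.2) / (A.1 0 0 - A.1 1 1)) x.2, by
    rw [comm_iff]
    simp [mk2]
    field_simp [sub_ne_zero.mpr h]
    ring⟩
  left_inv B := by
    have hc := (comm_iff A B.1).mp B.2
    apply Subtype.ext; apply Subtype.ext
    ext i j
    fin_cases i <;> fin_cases j <;> simp [mk2, tri_apply_10]
    field_simp [sub_ne_zero.mpr h]
    linear_combination -hc
  right_inv x := by simp [mk2]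

def commEquiv2 (A : Tri F) (h : A.1 0 0 = A.1 1 1) (hb : A.1 0 1 ≠ 0) :
    {B : Tri F // A * B = B * A} ≃ F × F where
  toFun B := (B.1.1 0 0, B.1.1 0 1)
  invFun x := ⟨mk2 x.1 x.2 x.1, by
    rw [comm_iff]
    simp [mk2, ← h]
    ring⟩
  left_inv B := by
    have hc := (comm_iff A B.1).mp B.2
    rw [← h] at hc
    have hz : B.1.1 1 1 = B.1.1 0 0 := by
      have : A.1 0 1 * (B.1.1 1 1 - B.1.1 0 0) = 0 := by linear_combination hc
      rcases mul_eq_zero.mp this with h' | h'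
      · exact absurd h' hb
      · exact sub_eq_zero.mp h'
    apply Subtype.ext; apply Subtype.ext
    ext i j
    fin_cases i <;> fin_cases j <;> simp [mk2, tri_apply_10, hz]
  right_inv x := by simp [mk2]

lemma card_commutant (A : Tri F) (hA : A ∉ Set.center (Tri F)) :
    Fintype.card {B : Tri F // A * B = B * A} = Fintype.card F ^ 2 := by
  rw [mem_center_iff'] at hA
  push_neg at hA
  by_cases h : A.1 0 0 = A.1 1 1
  · rw [Fintype.card_congr (commEquiv2 A h (hA h))]
    simp [sq]
  · rw [Fintype.card_congr (commEquiv1 A h)]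
    simp [sq]
end Aux3

section Aux4
variable {F : Type*} [Field F] [Fintype F] [DecidableEq F]
set_option linter.unusedSectionVars false

lemma card_nbhd (v : Tri F) (hv : v ∉ Set.center (Tri F)) :
    Nat.card {B : Tri F // (v * B = B * v ∧ B ∉ Set.center (Tri F)) ∧ B ≠ v} =
      Fintype.card F ^ 2 - Fintype.card F - 1 := by
  classical
  set q := Fintype.card F with hq
  have hs : (Finset.univ.filter fun B : Tri F => v * B = B * v).card = q ^ 2 := by
    rw [← Fintype.card_subtype]
    exact card_commutant v hv
  have ht : (Finset.univ.filter fun B : Tri F => B ∈ Set.center (Tri F)).card = q := by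
    rw [← Fintype.card_subtype]
    exact Fintype.card_congr centerEquiv
  have hvt : v ∉ (Finset.univ.filter fun B : Tri F => B ∈ Set.center (Tri F)) := by
    simp [hv]
  have hsub : insert v (Finset.univ.filter fun B : Tri F => B ∈ Set.center (Tri F)) ⊆
      (Finset.univ.filter fun B : Tri F => v * B = B * v) := by
    intro B hB
    simp only [Finset.mem_insert, Finset.mem_filter, Finset.mem_univ, true_and] at *
    rcases hB with rfl | hB
    · rfl
    · exact (Semigroup.mem_center_iff.mp hB v)
  have key : (Finset.univ.filter
      fun B : Tri F => (v * B = B * v ∧ B ∉ Set.center (Tri F)) ∧ B ≠ v) =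
      (Finset.univ.filter fun B : Tri F => v * B = B * v) \
        insert v (Finset.univ.filter fun B : Tri F => B ∈ Set.center (Tri F)) := by
    ext B
    simp only [Finset.mem_filter, Finset.mem_univ, true_and, Finset.mem_sdiff,
      Finset.mem_insert]
    tauto
  rw [Nat.card_eq_fintype_card, Fintype.card_subtype, key, Finset.card_sdiff_of_subset hsub,
    Finset.card_insert_of_notMem hvt, hs, ht]
  omega

def nbhdEquiv (v : {x : Tri F // x ∉ Set.center (Tri F)}) :
    (commGraph (Tri F)).neighborSet v ≃
      {B : Tri F // ((v : Tri F) * B = B * v ∧ B ∉ Set.center (Tri F)) ∧ B ≠ ↑v} where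
  toFun b := ⟨b.1.1, ⟨b.2.2, b.1.2⟩, fun h => b.2.1 (Subtype.ext h).symm⟩
  invFun B := ⟨⟨B.1, B.2.1.2⟩, ⟨fun h => B.2.2 (congrArg Subtype.val h).symm, B.2.1.1⟩⟩
  left_inv b := by apply Subtype.ext; apply Subtype.ext; rfl
  right_inv B := rfl

end Aux4

/-- Corollary 2.3: for a finite field `F` of order `q = p^n`, the commuting
graph of `Tri F` has `(1/2) q (q^2 - 1) (q^2 - q - 1)` edges, i.e. twice the
number of edges is `q (q^2 - 1) (q^2 - q - 1)`. -/
theorem card_edges_commGraph_tri_field {F : Type*} [Field F] [Fintype F]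
    (p n : ℕ) (hp : p.Prime) (hn : 1 ≤ n) (hq : Fintype.card F = p ^ n) :
    2 * Nat.card (commGraph (Tri F)).edgeSet =
      p ^ n * ((p ^ n) ^ 2 - 1) * ((p ^ n) ^ 2 - p ^ n - 1) := by
  classical
  letI : DecidableEq F := Classical.decEq F
  set q := p ^ n with hqq
  have hq2 : 2 ≤ q := by
    calc 2 ≤ p := hp.two_le
    _ = p ^ 1 := (pow_one p).symm
    _ ≤ p ^ n := Nat.pow_le_pow_right hp.pos hn
  letI : Fintype {x : Tri F // x ∉ Set.center (Tri F)} := Fintype.ofFinite _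
  letI : DecidableRel (commGraph (Tri F)).Adj := Classical.decRel _
  -- degree of every vertex
  have hdeg : ∀ v : {x : Tri F // x ∉ Set.center (Tri F)},
      (commGraph (Tri F)).degree v = q ^ 2 - q - 1 := by
    intro v
    rw [← SimpleGraph.card_neighborSet_eq_degree, ← Nat.card_eq_fintype_card,
      Nat.card_congr (nbhdEquiv v), card_nbhd v.1 v.2, hq]
  -- number of vertices
  have hV : Fintype.card {x : Tri F // x ∉ Set.center (Tri F)} = q ^ 3 - q := by
    rw [Fintype.card_subtype_compl, card_tri, hq]
    congr 1
    rw [← hq, ← Fintype.card_congr (centerEquiv (F := F))]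
  have hE : Nat.card (commGraph (Tri F)).edgeSet =
      (commGraph (Tri F)).edgeFinset.card := by
    rw [Nat.card_eq_fintype_card, SimpleGraph.edgeFinset_card]
  rw [hE, ← SimpleGraph.sum_degrees_eq_twice_card_edges]
  rw [Finset.sum_congr rfl (fun v _ => hdeg v), Finset.sum_const, Finset.card_univ,
    hV, smul_eq_mul]
  have h1 : q ≤ q ^ 3 := Nat.le_self_pow (by norm_num) q
  have h2 : 1 ≤ q ^ 2 := Nat.one_le_pow _ _ (by omega)
  have h3 : q + 1 ≤ q ^ 2 := by nlinarith
  zify [h1, h2, h3, Nat.sub_sub]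
  ring
end

section
/- Let F be a finite field with q elements and T = Tr(F). Then every vertex of the commuting graph Γ(T) has degree exactly q^2 − q − 1; that is, Γ(T) is (q^2 − q − 1)-regular. -/
open Matrix

section
variable {F : Type*} [Field F]

lemma mem_tri_iff (M : Matrix (Fin 2) (Fin 2) F) : M ∈ Tri F ↔ M 1 0 = 0 := Iff.rfl

def scalarT (a : F) : Tri F :=
  ⟨a • (1 : Matrix (Fin 2) (Fin 2) F), by
    rw [mem_tri_iff]
    simp [Matrix.one_apply]⟩

lemma coe_scalarT (a : F) : (scalarT a : Matrix (Fin 2) (Fin 2) F) = a • 1 := rfl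

lemma scalarT_central (a : F) : scalarT a ∈ Set.center (Tri F) := by
  rw [Semigroup.mem_center_iff]
  intro g
  refine Subtype.ext ?_
  show (g : Matrix (Fin 2) (Fin 2) F) * (a • 1) = (a • 1) * (g : Matrix (Fin 2) (Fin 2) F)
  rw [mul_smul_comm, smul_mul_assoc, mul_one, one_mul]

lemma scalarT_injective : Function.Injective (scalarT (F := F)) := by
  intro a b h
  have := congrFun (congrFun (congrArg Subtype.val h) 0) 0
  simpa [coe_scalarT, Matrix.one_apply] using this

lemma center_eq : Set.center (Tri F) = Set.range (scalarT (F := F)) := by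
  ext B
  constructor
  · intro hB
    have hE12 : (!![0,1;0,0] : Matrix (Fin 2) (Fin 2) F) ∈ Tri F := by
      rw [mem_tri_iff]; simp
    have hE00 : (!![1,0;0,0] : Matrix (Fin 2) (Fin 2) F) ∈ Tri F := by
      rw [mem_tri_iff]; simp
    have h1 := Semigroup.mem_center_iff.mp hB ⟨_, hE12⟩
    have h2 := Semigroup.mem_center_iff.mp hB ⟨_, hE00⟩
    have hB10 : (B : Matrix (Fin 2) (Fin 2) F) 1 0 = 0 := B.2
    have h1' : ((⟨_, hE12⟩ * B : Tri F) : Matrix (Fin 2) (Fin 2) F) 0 1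
        = ((B * ⟨_, hE12⟩ : Tri F) : Matrix (Fin 2) (Fin 2) F) 0 1 := by rw [h1]
    have h2' : ((⟨_, hE00⟩ * B : Tri F) : Matrix (Fin 2) (Fin 2) F) 0 1
        = ((B * ⟨_, hE00⟩ : Tri F) : Matrix (Fin 2) (Fin 2) F) 0 1 := by rw [h2]
    simp only [MulMemClass.coe_mul, Matrix.mul_apply, Fin.sum_univ_two] at h1' h2'
    simp at h1' h2'
    refine ⟨(B : Matrix (Fin 2) (Fin 2) F) 0 0, ?_⟩
    refine Subtype.ext ?_
    rw [coe_scalarT]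
    ext i j
    fin_cases i <;> fin_cases j <;> simp [Matrix.one_apply, hB10, h1', h2']
  · rintro ⟨a, rfl⟩
    exact scalarT_central a

lemma coe_lin (A : Tri F) (a b : F) :
    ((scalarT a + scalarT b * A : Tri F) : Matrix (Fin 2) (Fin 2) F)
      = a • 1 + b • (A : Matrix (Fin 2) (Fin 2) F) := by
  push_cast [coe_scalarT, smul_mul_assoc]
  simp [smul_mul_assoc]

end

/-- Theorem 2.9: the commuting graph of `Tri F` over a finite field `F` of
order `q` is `(q^2 - q - 1)`-regular: every vertex has exactly `q^2 - q - 1`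
neighbours. -/
theorem commGraph_tri_field_regular {F : Type*} [Field F] [Fintype F] (q : ℕ)
    (hq : Fintype.card F = q) (v : {x : Tri F // x ∉ Set.center (Tri F)}) :
    Nat.card ((commGraph (Tri F)).neighborSet v) = q ^ 2 - q - 1 := by
  subst hq
  set A : Tri F := v.1 with hAdef
  have hA : A ∉ Set.center (Tri F) := v.2
  have hA10 : (A : Matrix (Fin 2) (Fin 2) F) 1 0 = 0 := A.2
  have hAkey : ¬ ((A : Matrix (Fin 2) (Fin 2) F) 0 0 = (A : Matrix (Fin 2) (Fin 2) F) 1 1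
      ∧ (A : Matrix (Fin 2) (Fin 2) F) 0 1 = 0) := by
    rintro ⟨h1, h2⟩
    apply hA
    have hAs : A = scalarT ((A : Matrix (Fin 2) (Fin 2) F) 0 0) := by
      refine Subtype.ext ?_
      rw [coe_scalarT]
      ext i j
      fin_cases i <;> fin_cases j <;> simp [Matrix.one_apply, hA10, h2, h1]
    rw [hAs]; exact scalarT_central _
  set Cs : Set (Tri F) := {B | A * B = B * A} with hCs
  have hcen : ∀ B ∈ Set.center (Tri F), B ∈ Cs := by
    intro B hB
    exact (Semigroup.mem_center_iff.mp hB A)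
  -- the map F × F → Cs
  have hmem : ∀ p : F × F, scalarT p.1 + scalarT p.2 * A ∈ Cs := by
    intro p
    have h1 : Commute A (scalarT p.1) := (Semigroup.mem_center_iff.mp (scalarT_central p.1) A)
    have h2 : Commute A (scalarT p.2) := (Semigroup.mem_center_iff.mp (scalarT_central p.2) A)
    exact (h1.add_right (h2.mul_right (Commute.refl A)))
  have e1 : F × F ≃ Cs := by
    refine Equiv.ofBijective (fun p => ⟨scalarT p.1 + scalarT p.2 * A, hmem p⟩) ⟨?_, ?_⟩
    · intro p p' h
      have h0 : scalarT p.1 + scalarT p.2 * A = scalarT p'.1 + scalarT p'.2 * A :=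
        congrArg Subtype.val h
      have h' := congrArg (fun x => ((x : Tri F) : Matrix (Fin 2) (Fin 2) F)) h0
      simp only [coe_lin] at h'
      have e00 := congrFun (congrFun h' 0) 0
      have e01 := congrFun (congrFun h' 0) 1
      have e11 := congrFun (congrFun h' 1) 1
      simp [Matrix.one_apply] at e00 e01 e11
      have hb : p.2 = p'.2 := by
        by_cases hy : (A : Matrix (Fin 2) (Fin 2) F) 0 1 = 0
        · have hx : (A : Matrix (Fin 2) (Fin 2) F) 0 0 ≠ (A : Matrix (Fin 2) (Fin 2) F) 1 1 :=
            fun h => hAkey ⟨h, hy⟩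
          have hd : (A : Matrix (Fin 2) (Fin 2) F) 0 0 - (A : Matrix (Fin 2) (Fin 2) F) 1 1 ≠ 0 :=
            sub_ne_zero.mpr hx
          have hh : p.2 * ((A : Matrix (Fin 2) (Fin 2) F) 0 0 - (A : Matrix (Fin 2) (Fin 2) F) 1 1)
              = p'.2 * ((A : Matrix (Fin 2) (Fin 2) F) 0 0 - (A : Matrix (Fin 2) (Fin 2) F) 1 1) := by
            linear_combination e00 - e11
          exact mul_right_cancel₀ hd hh
        · exact e01.resolve_right hy
      have ha : p.1 = p'.1 := by
        linear_combination e00 - (A : Matrix (Fin 2) (Fin 2) F) 0 0 * hb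
      exact Prod.ext ha hb
    · rintro ⟨B, hB⟩
      have hB10 : (B : Matrix (Fin 2) (Fin 2) F) 1 0 = 0 := B.2
      have hBv : (A : Matrix (Fin 2) (Fin 2) F) * B = (B : Matrix (Fin 2) (Fin 2) F) * A := by
        have := Subtype.ext_iff.mp hB
        simpa using this
      have rel := congrFun (congrFun hBv 0) 1
      simp [Matrix.mul_apply, Fin.sum_univ_two, hA10, hB10] at rel
      by_cases hx : (A : Matrix (Fin 2) (Fin 2) F) 0 0 = (A : Matrix (Fin 2) (Fin 2) F) 1 1
      · have hy : (A : Matrix (Fin 2) (Fin 2) F) 0 1 ≠ 0 := fun h => hAkey ⟨hx, h⟩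
        refine ⟨(((B : Matrix (Fin 2) (Fin 2) F) 0 0
            - ((B : Matrix (Fin 2) (Fin 2) F) 0 1 / (A : Matrix (Fin 2) (Fin 2) F) 0 1)
              * (A : Matrix (Fin 2) (Fin 2) F) 0 0),
            ((B : Matrix (Fin 2) (Fin 2) F) 0 1 / (A : Matrix (Fin 2) (Fin 2) F) 0 1)), ?_⟩
        have hps : (B : Matrix (Fin 2) (Fin 2) F) 1 1 = (B : Matrix (Fin 2) (Fin 2) F) 0 0 := by
          have h2 : (A : Matrix (Fin 2) (Fin 2) F) 0 1 * (B : Matrix (Fin 2) (Fin 2) F) 1 1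
              = (A : Matrix (Fin 2) (Fin 2) F) 0 1 * (B : Matrix (Fin 2) (Fin 2) F) 0 0 := by
            linear_combination rel - (B : Matrix (Fin 2) (Fin 2) F) 0 1 * hx
          exact mul_left_cancel₀ hy h2
        refine Subtype.ext (Subtype.ext ?_)
        rw [coe_lin]
        ext i j
        fin_cases i <;> fin_cases j
        · simp only [Matrix.add_apply, Matrix.smul_apply, Matrix.one_apply, smul_eq_mul]
          try simp
          try ring
        · simp only [Matrix.add_apply, Matrix.smul_apply, Matrix.one_apply, smul_eq_mul]
          try simp
          exact div_mul_cancel₀ _ hy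
        · simp [Matrix.one_apply, hA10, hB10]
        · simp only [Matrix.add_apply, Matrix.smul_apply, Matrix.one_apply, smul_eq_mul]
          try simp
          linear_combination
            (-((B : Matrix (Fin 2) (Fin 2) F) 0 1 / (A : Matrix (Fin 2) (Fin 2) F) 0 1)) * hx - hps
      · have hd : (A : Matrix (Fin 2) (Fin 2) F) 0 0 - (A : Matrix (Fin 2) (Fin 2) F) 1 1 ≠ 0 :=
          sub_ne_zero.mpr hx
        obtain ⟨b, hbdef⟩ : ∃ b : F, b = ((B : Matrix (Fin 2) (Fin 2) F) 0 0
            - (B : Matrix (Fin 2) (Fin 2) F) 1 1)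
          / ((A : Matrix (Fin 2) (Fin 2) F) 0 0 - (A : Matrix (Fin 2) (Fin 2) F) 1 1) := ⟨_, rfl⟩
        refine ⟨((B : Matrix (Fin 2) (Fin 2) F) 0 0 - b * (A : Matrix (Fin 2) (Fin 2) F) 0 0, b), ?_⟩
        refine Subtype.ext (Subtype.ext ?_)
        rw [coe_lin]
        ext i j
        fin_cases i <;> fin_cases j
        · simp only [Matrix.add_apply, Matrix.smul_apply, Matrix.one_apply, smul_eq_mul]
          try simp
          try ring
        · simp only [Matrix.add_apply, Matrix.smul_apply, Matrix.one_apply, smul_eq_mul]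
          try simp
          rw [hbdef]
          field_simp
          linear_combination -rel
        · simp [Matrix.one_apply, hA10, hB10]
        · simp only [Matrix.add_apply, Matrix.smul_apply, Matrix.one_apply, smul_eq_mul]
          try simp
          rw [hbdef]
          field_simp
          ring
  haveI : Finite (Tri F) := Subtype.finite
  have hZsub : Set.center (Tri F) ∪ {A} ⊆ Cs := by
    rintro B (hB | hB)
    · exact hcen B hB
    · rw [Set.mem_singleton_iff] at hB
      subst hB
      show A * A = A * A
      rfl
  have e2 : ((commGraph (Tri F)).neighborSet v) ≃ ↥(Cs \ (Set.center (Tri F) ∪ {A})) := by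
    refine Equiv.ofBijective (fun b => ⟨b.1.1, ?_, ?_⟩) ⟨?_, ?_⟩
    · exact b.2.2
    · rintro (h | h)
      · exact b.1.2 h
      · exact b.2.1 (Subtype.ext h.symm)
    · intro b c h
      have h0 : b.1.1 = c.1.1 :=
        congrArg (fun x : ↥(Cs \ (Set.center (Tri F) ∪ {A})) => x.1) h
      exact Subtype.ext (Subtype.ext h0)
    · rintro ⟨B, hBc, hBn⟩
      have hB1 : B ∉ Set.center (Tri F) := fun h => hBn (Or.inl h)
      have hB2 : B ≠ A := fun h => hBn (Or.inr h)
      refine ⟨⟨⟨B, hB1⟩, ⟨fun h => hB2 (congrArg Subtype.val h).symm, hBc⟩⟩, ?_⟩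
      exact Subtype.ext rfl
  have hcard1 : Cs.ncard = Fintype.card F ^ 2 := by
    rw [← Nat.card_coe_set_eq, ← Nat.card_congr e1, Nat.card_prod,
      Nat.card_eq_fintype_card, sq]
  have hcardZ : (Set.center (Tri F)).ncard = Fintype.card F := by
    rw [← Nat.card_coe_set_eq, center_eq,
      ← Nat.card_congr (Equiv.ofInjective _ (scalarT_injective (F := F))),
      Nat.card_eq_fintype_card]
  have hcardU : (Set.center (Tri F) ∪ {A}).ncard = Fintype.card F + 1 := by
    rw [Set.ncard_union_eq (Set.disjoint_singleton_right.mpr hA) (Set.toFinite _)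
      (Set.toFinite _), hcardZ, Set.ncard_singleton]
  calc Nat.card ((commGraph (Tri F)).neighborSet v)
      = Nat.card ↥(Cs \ (Set.center (Tri F) ∪ {A})) := Nat.card_congr e2
    _ = (Cs \ (Set.center (Tri F) ∪ {A})).ncard := Nat.card_coe_set_eq _
    _ = Cs.ncard - (Set.center (Tri F) ∪ {A}).ncard :=
        Set.ncard_diff hZsub (Set.toFinite _)
    _ = Fintype.card F ^ 2 - (Fintype.card F + 1) := by rw [hcard1, hcardU]
    _ = Fintype.card F ^ 2 - Fintype.card F - 1 := by omega
end

section
/- Let F be a finite field with q elements and T = Tr(F). Then the commuting graph Γ(T) is disconnected; in fact there exist two vertices with no path between them (the diameter is infinite). -/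
open Matrix

section Aux

variable {F : Type*} [Field F]

lemma Tri.lower (u : Tri F) : (u : Matrix (Fin 2) (Fin 2) F) 1 0 = 0 := u.2

/-- A "scalar-like" element of `Tri F` is central. -/
lemma tri_central (u : Tri F) (hd : (u : Matrix (Fin 2) (Fin 2) F) 0 0 = u.1 1 1)
    (h01 : (u : Matrix (Fin 2) (Fin 2) F) 0 1 = 0) : u ∈ Set.center (Tri F) := by
  rw [Semigroup.mem_center_iff]
  intro g
  ext i j
  have hg : (g : Matrix (Fin 2) (Fin 2) F) 1 0 = 0 := g.2
  have hu : (u : Matrix (Fin 2) (Fin 2) F) 1 0 = 0 := u.2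
  show ((g : Matrix (Fin 2) (Fin 2) F) * u) i j = ((u : Matrix (Fin 2) (Fin 2) F) * g) i j
  fin_cases i <;> fin_cases j <;>
    simp [Matrix.mul_apply, Fin.sum_univ_two, hg, hu, h01, hd, mul_comm]

lemma tri_key (u w : Tri F) (hd : (u : Matrix (Fin 2) (Fin 2) F) 0 0 = u.1 1 1)
    (h01 : (u : Matrix (Fin 2) (Fin 2) F) 0 1 ≠ 0)
    (hc : (u : Matrix (Fin 2) (Fin 2) F) * w = (w : Matrix (Fin 2) (Fin 2) F) * u) :
    (w : Matrix (Fin 2) (Fin 2) F) 0 0 = w.1 1 1 := by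
  have h := congrFun (congrFun hc 0) 1
  simp only [Matrix.mul_apply, Fin.sum_univ_two] at h
  -- h : u 0 0 * w 0 1 + u 0 1 * w 1 1 = w 0 0 * u 0 1 + w 0 1 * u 1 1
  rw [← hd] at h
  have : (u : Matrix (Fin 2) (Fin 2) F) 0 1 * w.1 1 1
      = (u : Matrix (Fin 2) (Fin 2) F) 0 1 * w.1 0 0 := by
    rw [mul_comm ((w : Matrix (Fin 2) (Fin 2) F) 0 0)] at h
    linear_combination h
  exact (mul_left_cancel₀ h01 this).symm

end Aux

/-- Theorem 2.9(ii): the commuting graph of `Tri F` over a finite field `F`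
is disconnected: there are two vertices with no path between them (so the
diameter is infinite). -/
theorem commGraph_tri_field_disconnected {F : Type*} [Field F] [Fintype F] :
    ∃ u v : {x : Tri F // x ∉ Set.center (Tri F)},
      ¬ (commGraph (Tri F)).Reachable u v := by
  classical
  -- the matrices E12 and E11
  have hAmem : (!![0, 1; 0, 0] : Matrix (Fin 2) (Fin 2) F) ∈ Tri F := by
    show (!![(0:F), 1; 0, 0]) 1 0 = 0; simp
  have hBmem : (!![1, 0; 0, 0] : Matrix (Fin 2) (Fin 2) F) ∈ Tri F := by
    show (!![(1:F), 0; 0, 0]) 1 0 = 0; simp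
  set A : Tri F := ⟨!![0, 1; 0, 0], hAmem⟩ with hA
  set B : Tri F := ⟨!![1, 0; 0, 0], hBmem⟩ with hB
  have hnc : (A : Matrix (Fin 2) (Fin 2) F) * B ≠ (B : Matrix (Fin 2) (Fin 2) F) * A := by
    intro h
    have := congrFun (congrFun h 0) 1
    simp [hA, hB, Matrix.mul_apply, Fin.sum_univ_two] at this
  have hAnc : A ∉ Set.center (Tri F) := by
    intro h
    rw [Semigroup.mem_center_iff] at h
    exact hnc (congrArg Subtype.val (h B)).symm
  have hBnc : B ∉ Set.center (Tri F) := by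
    intro h
    rw [Semigroup.mem_center_iff] at h
    exact hnc (congrArg Subtype.val (h A))
  refine ⟨⟨A, hAnc⟩, ⟨B, hBnc⟩, ?_⟩
  intro hreach
  obtain ⟨p⟩ := hreach
  -- invariant: equal diagonal entries propagates along walks
  have inv : ∀ (x y : {x : Tri F // x ∉ Set.center (Tri F)})
      (_ : (commGraph (Tri F)).Walk x y),
      (x.1 : Matrix (Fin 2) (Fin 2) F) 0 0 = x.1.1 1 1 →
      (y.1 : Matrix (Fin 2) (Fin 2) F) 0 0 = y.1.1 1 1 := by
    intro x y p
    induction p with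
    | nil => exact id
    | cons h q ih =>
      rename_i a b c
      intro ha
      apply ih
      have h01 : (a.1 : Matrix (Fin 2) (Fin 2) F) 0 1 ≠ 0 := by
        intro h0
        exact a.2 (tri_central a.1 ha h0)
      exact tri_key a.1 b.1 ha h01 (congrArg Subtype.val h.2)
  have := inv _ _ p (by simp [hA])
  simp [hB] at this
end

section
/- Let F be a finite field with q elements and T = Tr(F). Then the independence number of the commuting graph Γ(T) is q + 1. -/
open Matrix

section Aux

variable {F : Type*} [Field F]

lemma mem_tri {R : Type*} [CommRing R] {M : Matrix (Fin 2) (Fin 2) R} :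
    M ∈ Tri R ↔ M 1 0 = 0 := Iff.rfl

lemma tri_comm_iff (A B : Tri F) :
    (A : Matrix (Fin 2) (Fin 2) F) * (B : Matrix (Fin 2) (Fin 2) F) =
      (B : Matrix (Fin 2) (Fin 2) F) * (A : Matrix (Fin 2) (Fin 2) F) ↔
    ((A : Matrix (Fin 2) (Fin 2) F) 0 0 - (A : Matrix (Fin 2) (Fin 2) F) 1 1) *
      (B : Matrix (Fin 2) (Fin 2) F) 0 1 =
    ((B : Matrix (Fin 2) (Fin 2) F) 0 0 - (B : Matrix (Fin 2) (Fin 2) F) 1 1) *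
      (A : Matrix (Fin 2) (Fin 2) F) 0 1 := by
  have hA : (A : Matrix (Fin 2) (Fin 2) F) 1 0 = 0 := A.2
  have hB : (B : Matrix (Fin 2) (Fin 2) F) 1 0 = 0 := B.2
  constructor
  · intro h
    have h01 := congrFun (congrFun h 0) 1
    simp only [Matrix.mul_apply, Fin.sum_univ_two, hA, hB, mul_zero, zero_mul,
      add_zero, zero_add] at h01
    linear_combination h01
  · intro h
    ext i j
    fin_cases i <;> fin_cases j <;>
      simp only [Fin.mk_zero, Fin.mk_one, Matrix.mul_apply, Fin.sum_univ_two, hA, hB,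
        mul_zero, zero_mul, add_zero, zero_add] <;>
      first | ring1 | linear_combination h

lemma tri_comm_iff' (A B : Tri F) :
    A * B = B * A ↔
    ((A : Matrix (Fin 2) (Fin 2) F) 0 0 - (A : Matrix (Fin 2) (Fin 2) F) 1 1) *
      (B : Matrix (Fin 2) (Fin 2) F) 0 1 =
    ((B : Matrix (Fin 2) (Fin 2) F) 0 0 - (B : Matrix (Fin 2) (Fin 2) F) 1 1) *
      (A : Matrix (Fin 2) (Fin 2) F) 0 1 := by
  rw [← tri_comm_iff A B, Subtype.ext_iff]
  push_cast
  rfl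

lemma mem_center_tri_iff (A : Tri F) :
    A ∈ Set.center (Tri F) ↔
      (A : Matrix (Fin 2) (Fin 2) F) 0 1 = 0 ∧
      (A : Matrix (Fin 2) (Fin 2) F) 0 0 = (A : Matrix (Fin 2) (Fin 2) F) 1 1 := by
  rw [Semigroup.mem_center_iff]
  constructor
  · intro h
    have hE : ((!![(0:F),1;0,0] : Matrix (Fin 2) (Fin 2) F)) ∈ Tri F := by
      rw [mem_tri]; simp
    have hD : ((!![(1:F),0;0,0] : Matrix (Fin 2) (Fin 2) F)) ∈ Tri F := by
      rw [mem_tri]; simp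
    have h1 := (tri_comm_iff' (⟨_, hE⟩ : Tri F) A).mp (h _)
    have h2 := (tri_comm_iff' (⟨_, hD⟩ : Tri F) A).mp (h _)
    have eE : ((⟨_, hE⟩ : Tri F) : Matrix (Fin 2) (Fin 2) F) = !![(0:F),1;0,0] := rfl
    have eD : ((⟨_, hD⟩ : Tri F) : Matrix (Fin 2) (Fin 2) F) = !![(1:F),0;0,0] := rfl
    rw [eE] at h1
    rw [eD] at h2
    norm_num at h1 h2
    exact ⟨h2, by linear_combination -h1⟩
  · rintro ⟨h01, hd⟩ g
    rw [tri_comm_iff']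
    rw [h01, hd]
    ring

end Aux

section Slope

variable {F : Type*} [Field F]

open Classical in
/-- The invariant classifying maximal commutative subalgebras. -/
noncomputable def trSlope (x : {x : Tri F // x ∉ Set.center (Tri F)}) : Option F :=
  if ((x.1 : Matrix (Fin 2) (Fin 2) F) 0 0 = (x.1 : Matrix (Fin 2) (Fin 2) F) 1 1) then none
  else some ((x.1 : Matrix (Fin 2) (Fin 2) F) 0 1 /
    ((x.1 : Matrix (Fin 2) (Fin 2) F) 0 0 - (x.1 : Matrix (Fin 2) (Fin 2) F) 1 1))

lemma trOffdiag_ne_zero (x : {x : Tri F // x ∉ Set.center (Tri F)})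
    (h : (x.1 : Matrix (Fin 2) (Fin 2) F) 0 0 = (x.1 : Matrix (Fin 2) (Fin 2) F) 1 1) :
    (x.1 : Matrix (Fin 2) (Fin 2) F) 0 1 ≠ 0 := by
  intro h01
  exact x.2 ((mem_center_tri_iff x.1).mpr ⟨h01, h⟩)

lemma trSlope_eq_iff (a b : {x : Tri F // x ∉ Set.center (Tri F)}) :
    trSlope a = trSlope b ↔ (a : Tri F) * b = b * a := by
  classical
  rw [tri_comm_iff']
  unfold trSlope
  split_ifs with h1 h2 h2
  · simp [h1, h2]
  · constructor
    · intro h; exact absurd h (by simp)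
    · intro h
      exfalso
      rw [h1, sub_self, zero_mul] at h
      exact (mul_ne_zero (sub_ne_zero.mpr h2) (trOffdiag_ne_zero a h1)) h.symm
  · constructor
    · intro h; exact absurd h (by simp)
    · intro h
      exfalso
      rw [h2, sub_self, zero_mul] at h
      exact (mul_ne_zero (sub_ne_zero.mpr h1) (trOffdiag_ne_zero b h2)) h
  · rw [Option.some_inj, div_eq_div_iff (sub_ne_zero.mpr h1) (sub_ne_zero.mpr h2)]
    constructor
    · intro h; linear_combination -h
    · intro h; linear_combination -h

lemma trCompl_adj_iff (a b : {x : Tri F // x ∉ Set.center (Tri F)}) :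
    ((commGraph (Tri F))ᶜ).Adj a b ↔ trSlope a ≠ trSlope b := by
  rw [SimpleGraph.compl_adj]
  constructor
  · rintro ⟨hne, hna⟩ hs
    exact hna ⟨hne, (trSlope_eq_iff a b).mp hs⟩
  · intro hs
    refine ⟨fun h => hs (by rw [h]), fun hadj => ?_⟩
    obtain ⟨h1, h2⟩ := hadj
    exact hs ((trSlope_eq_iff a b).mpr h2)

/-- Representatives of the `q+1` commuting classes. -/
noncomputable def trRep (o : Option F) : {x : Tri F // x ∉ Set.center (Tri F)} :=
  ⟨⟨!![o.elim 0 (fun _ => 1), o.elim 1 id; 0, 0], by rw [mem_tri]; simp⟩, by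
    rw [mem_center_tri_iff]
    cases o <;> simp⟩

lemma trSlope_trRep (o : Option F) : trSlope (trRep o) = o := by
  classical
  cases o with
  | none => simp [trSlope, trRep]
  | some t =>
    simp only [trSlope, trRep, Option.elim]
    norm_num

end Slope

/-- Theorem 2.9(ii): the independence number of the commuting graph of `Tri F`
over a finite field `F` of order `q` is `q + 1`. (An independent set of a
graph is precisely a clique of its complement, so the independence number is
the clique number of the complement graph.) -/
theorem indepNum_commGraph_tri_field {F : Type*} [Field F] [Fintype F] (q : ℕ)
    (hq : Fintype.card F = q) :
    ((commGraph (Tri F))ᶜ).cliqueNum = q + 1 := by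
  classical
  have hrepinj : Function.Injective (trRep (F := F)) := by
    intro o o' h
    rw [← trSlope_trRep (F := F) o, ← trSlope_trRep (F := F) o', h]
  have hcard : (Finset.univ.image (trRep (F := F))).card = q + 1 := by
    rw [Finset.card_image_of_injective _ hrepinj, Finset.card_univ, Fintype.card_option, hq]
  have hclique : ((commGraph (Tri F))ᶜ).IsNClique (q + 1)
      (Finset.univ.image (trRep (F := F))) := by
    constructor
    · intro a ha b hb hne
      simp only [Finset.coe_image, Set.mem_image] at ha hb
      obtain ⟨o, -, rfl⟩ := ha
      obtain ⟨o', -, rfl⟩ := hb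
      rw [trCompl_adj_iff, trSlope_trRep, trSlope_trRep]
      intro h; exact hne (by rw [h])
    · exact hcard
  have hub : ∀ n ∈ {n | ∃ s, ((commGraph (Tri F))ᶜ).IsNClique n s}, n ≤ q + 1 := by
    rintro n ⟨s, hs⟩
    rw [← hs.2]
    have : ∀ a ∈ s, trSlope a ∈ (Finset.univ : Finset (Option F)) := fun a _ => Finset.mem_univ _
    have hinj : Set.InjOn (trSlope (F := F)) ↑s := by
      intro a ha b hb h
      by_contra hne
      exact (trCompl_adj_iff a b).mp (hs.1 ha hb hne) h
    calc s.card ≤ (Finset.univ : Finset (Option F)).card :=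
          Finset.card_le_card_of_injOn trSlope this hinj
      _ = q + 1 := by rw [Finset.card_univ, Fintype.card_option, hq]
  apply le_antisymm
  · exact csSup_le ⟨q + 1, Finset.univ.image (trRep (F := F)), hclique⟩ hub
  exact le_csSup ⟨q + 1, hub⟩ ⟨_, hclique⟩
end
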